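/- Let d ≥ 1 and let (Z_k)_{k ≥ 1} be a sequence of linear automorphisms of ℝ^d. For 0 ≤ k ≤ l set Q(k,l) = Z_l ∘ ⋯ ∘ Z_{k+1} (the identity when k = l) and Q(l) = Q(0,l). Let (E_k)_{k ≥ 0} and (U_k)_{k ≥ 0} be linear subspaces of ℝ^d with ℝ^d = E_k ⊕ U_k, Z_{k+1}(E_k) = E_{k+1} and Z_{k+1}(U_k) = U_{k+1} for all k ≥ 0, and let P_k denote the linear projection of ℝ^d onto U_k along E_k. Let (v_k)_{k ≥ 0} be a sequence in ℝ^d, set Δv_0 = v_0 and Δv_l = v_l − Z_l v_{l−1} for l ≥ 1, and assume Σ_{l ≥ 0} ‖Q(l)^{−1} P_l Δv_l‖ < ∞, so that v = Σ_{l ≥ 0} Q(l)^{−1} P_l Δv_l is well defined. Then for every k ≥ 0, ‖Q(k)v − v_k‖ ≤ Σ_{l > k} ‖Q(k,l)^{−1} P_l Δv_l‖ + Σ_{0 ≤ l ≤ k} ‖Q(l,k)(Δv_l − P_l Δv_l)‖. -/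

import Mathlib

/-- Abstract form of the error estimate (4.4) in Lemma 4.1 of the paper. -/
theorem stmt_11 (d : ℕ) (hd : 1 ≤ d)
    (Z : ℕ → (Fin d → ℝ) ≃ₗ[ℝ] (Fin d → ℝ))
    (Q : ℕ → ℕ → (Fin d → ℝ) ≃ₗ[ℝ] (Fin d → ℝ))
    (hQrefl : ∀ k, Q k k = LinearEquiv.refl ℝ (Fin d → ℝ))
    (hQsucc : ∀ k l, k ≤ l → Q k (l + 1) = (Q k l).trans (Z (l + 1)))
    (E U : ℕ → Submodule ℝ (Fin d → ℝ))
    (hcompl : ∀ k, IsCompl (E k) (U k))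
    (hZE : ∀ k, (E k).map (Z (k + 1) : (Fin d → ℝ) →ₗ[ℝ] (Fin d → ℝ)) = E (k + 1))
    (hZU : ∀ k, (U k).map (Z (k + 1) : (Fin d → ℝ) →ₗ[ℝ] (Fin d → ℝ)) = U (k + 1))
    (P : ℕ → (Fin d → ℝ) →ₗ[ℝ] (Fin d → ℝ))
    (hPE : ∀ k, ∀ x ∈ E k, P k x = 0)
    (hPU : ∀ k, ∀ x ∈ U k, P k x = x)
    (v dv : ℕ → Fin d → ℝ)
    (hdv0 : dv 0 = v 0)
    (hdv : ∀ l, dv (l + 1) = v (l + 1) - Z (l + 1) (v l))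
    (hsum : Summable (fun l => ‖(Q 0 l).symm (P l (dv l))‖)) :
    ∀ k : ℕ,
      ‖Q 0 k (∑' l, (Q 0 l).symm (P l (dv l))) - v k‖ ≤
        (∑' l : ℕ, ‖(Q k (k + 1 + l)).symm (P (k + 1 + l) (dv (k + 1 + l)))‖) +
        ∑ l ∈ Finset.range (k + 1), ‖Q l k (dv l - P l (dv l))‖ := by
  intro k
  classical
  set a : ℕ → Fin d → ℝ := fun l => (Q 0 l).symm (P l (dv l)) with ha
  have hsa : Summable a := summable_norm_iff.mp hsum
  -- composition law
  have hQtrans : ∀ j m l, j ≤ m → m ≤ l → Q j l = (Q j m).trans (Q m l) := by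
    intro j m l hjm hml
    induction l, hml using Nat.le_induction with
    | base => rw [hQrefl]; ext x; simp
    | succ l hml ih =>
      rw [hQsucc j l (hjm.trans hml), hQsucc m l hml, ih]
      ext x; simp
  -- telescoping formula for v
  have hv : ∀ k, v k = ∑ l ∈ Finset.range (k + 1), Q l k (dv l) := by
    intro k
    induction k with
    | zero => simp [hQrefl, hdv0]
    | succ k ih =>
      have hz : v (k + 1) = dv (k + 1) + Z (k + 1) (v k) := by
        rw [hdv k]; abel
      have hZv : Z (k + 1) (v k) = ∑ l ∈ Finset.range (k + 1), Q l (k + 1) (dv l) := by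
        rw [ih, map_sum]
        refine Finset.sum_congr rfl fun l hl => ?_
        rw [hQsucc l k (Nat.lt_succ_iff.mp (Finset.mem_range.mp hl))]
        simp
      rw [hz, hZv, Finset.sum_range_succ _ (k + 1), hQrefl]
      simp [add_comm]
  -- summability of the tail
  have hsk : Summable fun l => a (k + 1 + l) := by
    have := (summable_nat_add_iff (k + 1)).mpr hsa
    simpa [add_comm] using this
  -- split the tsum
  have hsplit : (∑' l, a l)
      = ∑ l ∈ Finset.range (k + 1), a l + ∑' l, a (l + (k + 1)) :=
    (Summable.sum_add_tsum_nat_add (k + 1) hsa).symm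
  -- continuous linear map version of Q 0 k
  let f : (Fin d → ℝ) →L[ℝ] (Fin d → ℝ) :=
    LinearMap.toContinuousLinearMap (Q 0 k).toLinearMap
  have hf : ∀ x, f x = Q 0 k x := fun x => rfl
  have hmap : Q 0 k (∑' l, a l)
      = ∑ l ∈ Finset.range (k + 1), Q 0 k (a l) + ∑' l, Q 0 k (a (l + (k + 1))) := by
    have h1 : Summable fun l => a (l + (k + 1)) := by
      simpa [add_comm] using hsk
    calc Q 0 k (∑' l, a l)
        = f (∑ l ∈ Finset.range (k + 1), a l + ∑' l, a (l + (k + 1))) := by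
          rw [← hsplit]; rfl
      _ = ∑ l ∈ Finset.range (k + 1), f (a l) + f (∑' l, a (l + (k + 1))) := by
          rw [map_add, map_sum]
      _ = ∑ l ∈ Finset.range (k + 1), Q 0 k (a l) + ∑' l, Q 0 k (a (l + (k + 1))) := by
          rw [f.map_tsum h1]; rfl
  -- identify the terms
  have hterm1 : ∀ l, l ≤ k → Q 0 k (a l) = Q l k (P l (dv l)) := by
    intro l hl
    rw [hQtrans 0 l k (Nat.zero_le l) hl]
    simp [ha]
  have hterm2 : ∀ l, Q 0 k (a (k + 1 + l))
      = (Q k (k + 1 + l)).symm (P (k + 1 + l) (dv (k + 1 + l))) := by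
    intro l
    have hk : k ≤ k + 1 + l := by omega
    have := hQtrans 0 k (k + 1 + l) (Nat.zero_le k) hk
    rw [ha]
    simp only []
    rw [this]
    simp
  -- key identity
  have hkey : Q 0 k (∑' l, a l) - v k
      = (∑' l, (Q k (k + 1 + l)).symm (P (k + 1 + l) (dv (k + 1 + l))))
        - ∑ l ∈ Finset.range (k + 1), Q l k (dv l - P l (dv l)) := by
    rw [hmap, hv k]
    have e1 : ∑ l ∈ Finset.range (k + 1), Q 0 k (a l)
        = ∑ l ∈ Finset.range (k + 1), Q l k (P l (dv l)) :=
      Finset.sum_congr rfl fun l hl =>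
        hterm1 l (Nat.lt_succ_iff.mp (Finset.mem_range.mp hl))
    have e2 : (∑' l, Q 0 k (a (l + (k + 1))))
        = ∑' l, (Q k (k + 1 + l)).symm (P (k + 1 + l) (dv (k + 1 + l))) := by
      apply tsum_congr
      intro l
      rw [show l + (k + 1) = k + 1 + l by omega, hterm2 l]
    have e3 : ∑ l ∈ Finset.range (k + 1), Q l k (dv l - P l (dv l))
        = ∑ l ∈ Finset.range (k + 1), Q l k (dv l)
          - ∑ l ∈ Finset.range (k + 1), Q l k (P l (dv l)) := by
      rw [← Finset.sum_sub_distrib]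
      exact Finset.sum_congr rfl fun l _ => map_sub _ _ _
    rw [e1, e2, e3]
    abel
  rw [hkey]
  refine (norm_sub_le _ _).trans (add_le_add ?_ ?_)
  · -- tsum norm bound
    apply norm_tsum_le_tsum_norm
    apply summable_norm_iff.mpr
    have : (fun l => (Q k (k + 1 + l)).symm (P (k + 1 + l) (dv (k + 1 + l))))
        = fun l => f (a (k + 1 + l)) := by
      funext l
      rw [hf, hterm2 l]
    rw [this]
    exact hsk.map (f.toLinearMap.toAddMonoidHom) f.continuous
  · exact norm_sum_le _ _
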